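/- Let A, B ⊆ ℤ/nℤ with |A| = |B| = k ≥ 1, and write st₀(A,B) = {…, (i₋₁, j₋₁), (i₀, j₀), (i₁, j₁), …} with (i_t, j_t) strictly northwest of (i_{t+1}, j_{t+1}) for all t. Then for each r ∈ ℤ the set st_r(A,B) := {(i_t, j_{t+r}) : t ∈ ℤ} is an (A,B)-stream, and every (A,B)-stream equals st_r(A,B) for exactly one r ∈ ℤ. -/

import Mathlib

/-- A stream: an `(n,n)`-translation-invariant chain in the southeast order. -/
def IsStream (n : ℕ) (S : Set (ℤ × ℤ)) : Prop :=
  (∀ p : ℤ × ℤ, p ∈ S ↔ ((p.1 + n, p.2 + n) : ℤ × ℤ) ∈ S) ∧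
  ∀ p ∈ S, ∀ q ∈ S, p ≠ q →
    (p.1 < q.1 ∧ p.2 < q.2) ∨ (q.1 < p.1 ∧ q.2 < p.2)

/-- An `(A,B)`-stream: the residues of rows give `A` and of columns give `B`. -/
def IsABStream (n : ℕ) (A B : Finset (ZMod n)) (S : Set (ℤ × ℤ)) : Prop :=
  IsStream n S ∧
  (∀ a : ZMod n, a ∈ A ↔ ∃ p ∈ S, ((p.1 : ZMod n) = a)) ∧
  (∀ b : ZMod n, b ∈ B ↔ ∃ p ∈ S, ((p.2 : ZMod n) = b))

/-- A strictly monotone surjective map `ℤ → ℤ` is a shift. -/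
lemma stmt3_shift (f : ℤ → ℤ) (hm : StrictMono f) (hs : Function.Surjective f) :
    ∃ c : ℤ, ∀ t, f t = t + c := by
  have hstep : ∀ t, f (t + 1) = f t + 1 := by
    intro t
    by_contra h
    have h1 : f t < f (t + 1) := hm (by omega)
    obtain ⟨u, hu⟩ := hs (f t + 1)
    have h2 : t < u := hm.lt_iff_lt.mp (by omega)
    have h3 : u < t + 1 := hm.lt_iff_lt.mp (by omega)
    omega
  refine ⟨f 0, fun t => ?_⟩
  induction t using Int.induction_on with
  | zero => omega
  | succ i ih => rw [hstep]; omega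
  | pred i ih =>
    have h1 := hstep (-(i : ℤ) - 1)
    have e1 : -(i : ℤ) - 1 + 1 = -(i : ℤ) := by ring
    rw [e1] at h1
    omega

/-- Iterating a translation identity. -/
lemma stmt3_mult (g : ℤ → ℤ) (c d : ℤ) (h : ∀ t, g (t + c) = g t + d) :
    ∀ (m t : ℤ), g (t + m * c) = g t + m * d := by
  intro m
  induction m using Int.induction_on with
  | zero => intro t; simp
  | succ i ih =>
    intro t
    have e1 : t + ((i : ℤ) + 1) * c = (t + i * c) + c := by ring
    rw [e1, h, ih]; ring
  | pred i ih =>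
    intro t
    have e1 : (t + (-(i : ℤ) - 1) * c) + c = t + (-(i : ℤ)) * c := by ring
    have h2 := h (t + (-(i : ℤ) - 1) * c)
    rw [e1, ih] at h2
    have e3 : (-(i : ℤ) - 1) * d = -(i : ℤ) * d - d := by ring
    rw [e3]
    omega

theorem stmt3 (n k : ℕ) (hn : 0 < n) (hk : 0 < k) (A B : Finset (ZMod n))
    (hA : A.card = k) (hB : B.card = k)
    (e : ℤ → ℤ × ℤ)
    (he : IsABStream n A B (Set.range e))
    (hbox : (Set.range e ∩ Set.Icc (1 : ℤ) n ×ˢ Set.Icc (1 : ℤ) n).ncard = k)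
    (hmono : ∀ t : ℤ, (e t).1 < (e (t + 1)).1 ∧ (e t).2 < (e (t + 1)).2) :
    (∀ r : ℤ, IsABStream n A B (Set.range fun t => ((e t).1, (e (t + r)).2))) ∧
    ∀ S : Set (ℤ × ℤ), IsABStream n A B S →
      ∃! r : ℤ, S = Set.range fun t => ((e t).1, (e (t + r)).2) := by
  have ha : StrictMono fun t => (e t).1 := strictMono_int_of_lt_succ fun t => (hmono t).1
  have hb : StrictMono fun t => (e t).2 := strictMono_int_of_lt_succ fun t => (hmono t).2
  have hinv : ∀ p : ℤ × ℤ, p ∈ Set.range e ↔ ((p.1 + n, p.2 + n) : ℤ × ℤ) ∈ Set.range e :=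
    he.1.1
  -- the translation map on indices
  have hf : ∀ t : ℤ, ∃ u, e u = ((e t).1 + n, (e t).2 + n) := by
    intro t
    exact (hinv (e t)).mp ⟨t, rfl⟩
  choose f hf' using hf
  have hfmono : StrictMono f := by
    apply strictMono_int_of_lt_succ
    intro t
    have h1 : (e (f t)).1 = (e t).1 + n := by rw [hf' t]
    have h2 : (e (f (t + 1))).1 = (e (t + 1)).1 + n := by rw [hf' (t + 1)]
    have h3 : (e t).1 < (e (t + 1)).1 := (hmono t).1
    exact ha.lt_iff_lt.mp (by omega)
  have hfsurj : Function.Surjective f := by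
    intro s
    have hmem : (((e s).1 - n + n, (e s).2 - n + n) : ℤ × ℤ) ∈ Set.range e := by
      have : (((e s).1 - n + n, (e s).2 - n + n) : ℤ × ℤ) = e s := by
        refine Prod.ext ?_ ?_ <;> simp
      rw [this]; exact ⟨s, rfl⟩
    have hmem2 : (((e s).1 - n, (e s).2 - n) : ℤ × ℤ) ∈ Set.range e := (hinv _).mpr hmem
    obtain ⟨u, hu⟩ := hmem2
    refine ⟨u, ?_⟩
    have hei : Function.Injective e := fun s t h => ha.injective (congrArg Prod.fst h)
    apply hei
    rw [hf' u, hu]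
    refine Prod.ext ?_ ?_ <;> simp <;> omega
  obtain ⟨c, hc⟩ := stmt3_shift f hfmono hfsurj
  have hper : ∀ t, e (t + c) = ((e t).1 + n, (e t).2 + n) := by
    intro t
    rw [← hc t]; exact hf' t
  have hpa : ∀ t, (e (t + c)).1 = (e t).1 + n := fun t => by rw [hper t]
  have hpb : ∀ t, (e (t + c)).2 = (e t).2 + n := fun t => by rw [hper t]
  have hc1 : 0 < c := by
    have h1 : (e 0).1 < (e (0 + c)).1 := by rw [hpa 0]; omega
    have := ha.lt_iff_lt.mp h1
    omega
  have hmulta : ∀ (m t : ℤ), (e (t + m * c)).1 = (e t).1 + m * n :=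
    stmt3_mult (fun t => (e t).1) c n hpa
  have hmultb : ∀ (m t : ℤ), (e (t + m * c)).2 = (e t).2 + m * n :=
    stmt3_mult (fun t => (e t).2) c n hpb
  have hAiff : ∀ x : ZMod n, x ∈ A ↔ ∃ t : ℤ, (((e t).1 : ZMod n)) = x := by
    intro x
    rw [he.2.1 x]
    constructor
    · rintro ⟨p, ⟨t, rfl⟩, hp⟩; exact ⟨t, hp⟩
    · rintro ⟨t, ht⟩; exact ⟨e t, ⟨t, rfl⟩, ht⟩
  have hBiff : ∀ x : ZMod n, x ∈ B ↔ ∃ t : ℤ, (((e t).2 : ZMod n)) = x := by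
    intro x
    rw [he.2.2 x]
    constructor
    · rintro ⟨p, ⟨t, rfl⟩, hp⟩; exact ⟨t, hp⟩
    · rintro ⟨t, ht⟩; exact ⟨e t, ⟨t, rfl⟩, ht⟩
  -- c = k
  have hck : c = (k : ℤ) := by
    have himg : A = Finset.image (fun t => (((e t).1 : ZMod n))) (Finset.Ico (0 : ℤ) c) := by
      ext x
      rw [hAiff x]
      simp only [Finset.mem_image, Finset.mem_Ico]
      constructor
      · rintro ⟨t, ht⟩
        refine ⟨t % c, ⟨Int.emod_nonneg t (by omega), Int.emod_lt_of_pos t hc1⟩, ?_⟩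
        rw [← ht]
        have h1 : (e t).1 = (e (t % c)).1 + (t / c) * n := by
          conv_lhs => rw [← Int.emod_add_ediv_mul t c]
          exact hmulta (t / c) (t % c)
        rw [h1]
        push_cast
        simp [ZMod.natCast_self]
      · rintro ⟨t, _, ht⟩; exact ⟨t, ht⟩
    have hkey : ∀ s t : ℤ, 0 ≤ s → s < t → t < c →
        (((e s).1 : ZMod n)) = (((e t).1 : ZMod n)) → False := by
      intro s t _ hst htc hcast
      have h1 : (e s).1 < (e t).1 := ha hst
      have h2 : (e t).1 < (e (s + c)).1 := ha (by omega)
      have h3 : (e (s + c)).1 = (e s).1 + n := hpa s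
      have hdvd : (n : ℤ) ∣ (e t).1 - (e s).1 :=
        ((ZMod.intCast_eq_intCast_iff _ _ _).mp hcast).dvd
      have := Int.le_of_dvd (by omega) hdvd
      omega
    have hinj : Set.InjOn (fun t => (((e t).1 : ZMod n))) (Finset.Ico (0 : ℤ) c) := by
      intro s hs t ht hst
      simp only [Finset.coe_Ico, Set.mem_Ico] at hs ht
      by_contra hne
      rcases lt_or_gt_of_ne hne with h | h
      · exact hkey s t hs.1 h ht.2 hst
      · exact hkey t s ht.1 h hs.2 hst.symm
    rw [himg, Finset.card_image_of_injOn hinj, Int.card_Ico] at hA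
    omega
  rw [hck] at hpa hpb hmulta hmultb
  -- existence of index with prescribed first coordinate
  have hita : ∀ x : ℤ, ((x : ZMod n)) ∈ A → ∃ t : ℤ, (e t).1 = x := by
    intro x hx
    obtain ⟨t₀, ht₀⟩ := (hAiff _).mp hx
    obtain ⟨m, hm⟩ := ((ZMod.intCast_eq_intCast_iff _ _ _).mp ht₀).dvd
    rw [mul_comm] at hm
    exact ⟨t₀ + m * k, by rw [hmulta m t₀]; omega⟩
  have hitb : ∀ x : ℤ, ((x : ZMod n)) ∈ B → ∃ t : ℤ, (e t).2 = x := by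
    intro x hx
    obtain ⟨t₀, ht₀⟩ := (hBiff _).mp hx
    obtain ⟨m, hm⟩ := ((ZMod.intCast_eq_intCast_iff _ _ _).mp ht₀).dvd
    rw [mul_comm] at hm
    exact ⟨t₀ + m * k, by rw [hmultb m t₀]; omega⟩
  have hmemA : ∀ t : ℤ, (((e t).1 : ZMod n)) ∈ A := fun t => (hAiff _).mpr ⟨t, rfl⟩
  have hmemB : ∀ t : ℤ, (((e t).2 : ZMod n)) ∈ B := fun t => (hBiff _).mpr ⟨t, rfl⟩
  -- Part 1
  have part1 : ∀ r : ℤ, IsABStream n A B (Set.range fun t => ((e t).1, (e (t + r)).2)) := by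
    intro r
    refine ⟨⟨?_, ?_⟩, ?_, ?_⟩
    · -- invariance
      intro p
      constructor
      · rintro ⟨t, rfl⟩
        refine ⟨t + k, ?_⟩
        dsimp only
        refine Prod.ext ?_ ?_
        · exact hpa t
        · show (e (t + (k : ℤ) + r)).2 = (e (t + r)).2 + n
          rw [show t + (k : ℤ) + r = (t + r) + k by ring]
          exact hpb (t + r)
      · rintro ⟨u, hu⟩
        refine ⟨u - k, ?_⟩
        have hu' : (((e u).1, (e (u + r)).2) : ℤ × ℤ) = (p.1 + n, p.2 + n) := hu
        have h1 : (e u).1 = p.1 + n := (Prod.ext_iff.mp hu').1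
        have h2 : (e (u + r)).2 = p.2 + n := (Prod.ext_iff.mp hu').2
        have h3 : (e (u - k + k)).1 = (e (u - k)).1 + n := hpa (u - k)
        have h4 : (e (u - k + r + k)).2 = (e (u - k + r)).2 + n := hpb (u - k + r)
        rw [show u - (k : ℤ) + k = u by ring] at h3
        rw [show u - (k : ℤ) + r + k = u + r by ring] at h4
        show (((e (u - k)).1, (e (u - k + r)).2) : ℤ × ℤ) = p
        refine Prod.ext ?_ ?_ <;> dsimp only <;> omega
    · -- chain
      rintro p ⟨t, rfl⟩ q ⟨u, rfl⟩ hne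
      rcases lt_trichotomy t u with h | h | h
      · exact Or.inl ⟨ha h, hb (by omega)⟩
      · exact absurd (by rw [h]) hne
      · exact Or.inr ⟨ha h, hb (by omega)⟩
    · -- A residues
      intro x
      constructor
      · intro hx
        obtain ⟨t, ht⟩ := (hAiff x).mp hx
        exact ⟨((e t).1, (e (t + r)).2), ⟨t, rfl⟩, ht⟩
      · rintro ⟨p, ⟨t, rfl⟩, hp⟩
        exact (hAiff x).mpr ⟨t, hp⟩
    · -- B residues
      intro x
      constructor
      · intro hx
        obtain ⟨t, ht⟩ := (hBiff x).mp hx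
        exact ⟨((e (t - r)).1, (e (t - r + r)).2), ⟨t - r, rfl⟩, by
          rw [show t - r + r = t by ring]; exact ht⟩
      · rintro ⟨p, ⟨t, rfl⟩, hp⟩
        exact (hBiff x).mpr ⟨t + r, hp⟩
  refine ⟨part1, ?_⟩
  -- Part 2
  intro S hS
  have hSinv : ∀ p : ℤ × ℤ, p ∈ S ↔ ((p.1 + n, p.2 + n) : ℤ × ℤ) ∈ S := hS.1.1
  have hSchain := hS.1.2
  have hSresA : ∀ p ∈ S, ((p.1 : ZMod n)) ∈ A := fun p hp => (hS.2.1 _).mpr ⟨p, hp, rfl⟩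
  have hSresB : ∀ p ∈ S, ((p.2 : ZMod n)) ∈ B := fun p hp => (hS.2.2 _).mpr ⟨p, hp, rfl⟩
  have hSmult : ∀ (m : ℤ) (p : ℤ × ℤ), p ∈ S → ((p.1 + m * n, p.2 + m * n) : ℤ × ℤ) ∈ S := by
    intro m
    induction m using Int.induction_on with
    | zero => intro p hp; simpa using hp
    | succ i ih =>
      intro p hp
      have h1 := (hSinv (p.1 + (i : ℤ) * n, p.2 + (i : ℤ) * n)).mp (ih p hp)
      convert h1 using 2 <;> dsimp only <;> ring
    | pred i ih =>
      intro p hp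
      apply (hSinv (p.1 + (-(i : ℤ) - 1) * n, p.2 + (-(i : ℤ) - 1) * n)).mpr
      convert ih p hp using 2 <;> dsimp only <;> ring
  have hSfirst : ∀ x : ℤ, ((x : ZMod n)) ∈ A → ∃ p ∈ S, p.1 = x := by
    intro x hx
    obtain ⟨p, hp, hpx⟩ := (hS.2.1 _).mp hx
    obtain ⟨m, hm⟩ := ((ZMod.intCast_eq_intCast_iff _ _ _).mp hpx).dvd
    rw [mul_comm] at hm
    exact ⟨(p.1 + m * n, p.2 + m * n), hSmult m p hp, by dsimp; omega⟩
  have hSsecond : ∀ x : ℤ, ((x : ZMod n)) ∈ B → ∃ p ∈ S, p.2 = x := by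
    intro x hx
    obtain ⟨p, hp, hpx⟩ := (hS.2.2 _).mp hx
    obtain ⟨m, hm⟩ := ((ZMod.intCast_eq_intCast_iff _ _ _).mp hpx).dvd
    rw [mul_comm] at hm
    exact ⟨(p.1 + m * n, p.2 + m * n), hSmult m p hp, by dsimp; omega⟩
  have hSuniq1 : ∀ p ∈ S, ∀ q ∈ S, p.1 = q.1 → p = q := by
    intro p hp q hq h
    by_contra hne
    rcases hSchain p hp q hq hne with h1 | h1 <;> omega
  -- the point of S above each first coordinate of e
  have hP : ∀ t : ℤ, ∃ p, p ∈ S ∧ p.1 = (e t).1 := fun t => by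
    obtain ⟨p, hp, h1⟩ := hSfirst (e t).1 (hmemA t); exact ⟨p, hp, h1⟩
  choose P hPS hP1 using hP
  have hφ : ∀ t : ℤ, ∃ s, (e s).2 = (P t).2 := fun t => hitb (P t).2 (hSresB _ (hPS t))
  choose φ hφ' using hφ
  have hφmono : StrictMono φ := by
    intro t u htu
    have h1 : (P t).1 < (P u).1 := by rw [hP1, hP1]; exact ha htu
    have hne : P t ≠ P u := fun h => by rw [h] at h1; omega
    rcases hSchain _ (hPS t) _ (hPS u) hne with h | h
    · have h2 : (e (φ t)).2 < (e (φ u)).2 := by rw [hφ', hφ']; exact h.2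
      exact hb.lt_iff_lt.mp h2
    · omega
  have hφsurj : Function.Surjective φ := by
    intro s
    obtain ⟨q, hq, hq2⟩ := hSsecond (e s).2 (hmemB s)
    obtain ⟨t, ht⟩ := hita q.1 (hSresA _ hq)
    have hPq : P t = q := hSuniq1 _ (hPS t) _ hq (by rw [hP1, ht])
    refine ⟨t, hb.injective ?_⟩
    show (e (φ t)).2 = (e s).2
    rw [hφ', hPq, hq2]
  obtain ⟨r, hr⟩ := stmt3_shift φ hφmono hφsurj
  have hPt : ∀ t : ℤ, P t = ((e t).1, (e (t + r)).2) := by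
    intro t
    have h2 : (e (t + r)).2 = (P t).2 := by rw [← hr t]; exact hφ' t
    exact Prod.ext (hP1 t) h2.symm
  refine ⟨r, ?_, ?_⟩
  · -- S = range
    ext p
    constructor
    · intro hp
      obtain ⟨t, ht⟩ := hita p.1 (hSresA _ hp)
      have : p = P t := hSuniq1 _ hp _ (hPS t) (by rw [hP1, ht])
      exact ⟨t, by dsimp only; rw [this, hPt]⟩
    · rintro ⟨t, rfl⟩
      show (((e t).1, (e (t + r)).2) : ℤ × ℤ) ∈ S
      exact (hPt t) ▸ hPS t
  · -- uniqueness
    intro r' hr'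
    have h0 : (((e 0).1, (e (0 + r')).2) : ℤ × ℤ) ∈ S := by
      rw [hr']; exact ⟨0, rfl⟩
    have h1 : (((e 0).1, (e (0 + r')).2) : ℤ × ℤ) = P 0 :=
      hSuniq1 _ h0 _ (hPS 0) (by rw [hP1])
    rw [hPt 0] at h1
    have h2 : (e (0 + r')).2 = (e (0 + r)).2 := (Prod.ext_iff.mp h1).2
    have := hb.injective h2
    omega
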